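/- Let 1 < p < N and suppose f satisfies (f_reg), (f_eq) and (f_subc). Then there exist ε > 0, C_ε > 0 and s_ε > 1 such that f(s) ≤ C_ε · s^{p*-1-ε} for every s > s_ε. -/

import Mathlib

open Real Set Filter Topology

noncomputable def phip (p s : ℝ) : ℝ := |s| ^ (p - 2) * s

def Freg (f : ℝ → ℝ) : Prop :=
  ContinuousOn f (Ici 0) ∧ ContDiffOn ℝ 1 f (Ioi 0)

def Feq (f : ℝ → ℝ) : Prop :=
  f 0 = 0 ∧ f 1 = 0 ∧ (∀ s : ℝ, 0 < s → s < 1 → f s < 0) ∧ (∀ s : ℝ, 1 < s → 0 < f s)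

def Fzero (p : ℝ) (f : ℝ → ℝ) : Prop :=
  ∃ c : ℝ, ∀ᶠ s in 𝓝[>] (0:ℝ), c ≤ f s / s ^ (p - 1)

noncomputable def pstar (p : ℝ) (N : ℕ) : EReal :=
  if p < (N:ℝ) then (((N:ℝ) * p / ((N:ℝ) - p) : ℝ) : EReal) else ⊤

noncomputable def fstar (f : ℝ → ℝ) (s : ℝ) : ℝ := sSup (f '' Icc 1 s)

noncomputable def Fint (f : ℝ → ℝ) (s : ℝ) : ℝ := ∫ σ in (1:ℝ)..s, f σ

def Fsubl (p : ℝ) (f : ℝ → ℝ) : Prop :=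
  ∃ M : ℝ, 0 < M ∧ ∀ ε > 0, ∀ᶠ s in atTop, f s / s ^ (p - 1) ≤ M + ε

def FsubcWith (p : ℝ) (N : ℕ) (f : ℝ → ℝ) (η : ℝ) : Prop :=
  (∀ c : ℝ, ∃ᶠ s in atTop, c < f s / s ^ (p - 1)) ∧
  0 < η ∧ η < 1 ∧
  ∃ L : ℝ, (L : EReal) < pstar p N ∧
    ∀ᶠ s in atTop, fstar f s * s / Fint f (η * s) ≤ L

def Fsubc (p : ℝ) (N : ℕ) (f : ℝ → ℝ) : Prop := ∃ η : ℝ, FsubcWith p N f η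

/-- A radial solution of the Neumann problem on `[R1,R2]`. -/
def NeumannSol (p : ℝ) (N : ℕ) (R1 R2 : ℝ) (f u : ℝ → ℝ) : Prop :=
  (∀ x ∈ Icc R1 R2, DifferentiableAt ℝ u x) ∧
  ContinuousOn (deriv u) (Icc R1 R2) ∧
  (∀ x ∈ Icc R1 R2, 0 < u x) ∧
  deriv u R1 = 0 ∧ deriv u R2 = 0 ∧
  ContinuousOn (fun x => x ^ (N - 1) * phip p (deriv u x)) (Icc R1 R2) ∧
  ∀ x ∈ Ioc R1 R2,
    HasDerivAt (fun t => t ^ (N - 1) * phip p (deriv u t)) (-(x ^ (N - 1)) * f (u x)) x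

noncomputable def fhat (f : ℝ → ℝ) (s : ℝ) : ℝ := if 0 ≤ s then f s else 0

noncomputable def Fhat (f : ℝ → ℝ) (s : ℝ) : ℝ := ∫ σ in (1:ℝ)..s, fhat f σ

/-- A solution of the Cauchy problem with datum `d`, for the nonlinearity `g`. -/
def CauchySol (p : ℝ) (N : ℕ) (R1 R2 : ℝ) (g u : ℝ → ℝ) (d : ℝ) : Prop :=
  (∀ x ∈ Icc R1 R2, DifferentiableAt ℝ u x) ∧
  ContinuousOn (deriv u) (Icc R1 R2) ∧
  u R1 = d ∧ deriv u R1 = 0 ∧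
  ContinuousOn (fun x => x ^ (N - 1) * phip p (deriv u x)) (Icc R1 R2) ∧
  ∀ x ∈ Ioc R1 R2,
    HasDerivAt (fun t => t ^ (N - 1) * phip p (deriv u t)) (-(x ^ (N - 1)) * g (u x)) x

noncomputable def rOne (R1 R2 : ℝ) (u : ℝ → ℝ) : ℝ :=
  sSup {x | x ∈ Icc R1 R2 ∧ ∀ s ∈ Ico R1 x, 0 < u s}

noncomputable def rZero (R2 η d : ℝ) (u : ℝ → ℝ) : ℝ :=
  sSup {x | x ∈ Icc 0 R2 ∧ ∀ s ∈ Ico 0 x, η * d < u s}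

noncomputable def energy (p : ℝ) (f u : ℝ → ℝ) (x : ℝ) : ℝ :=
  |deriv u x| ^ p / (p / (p - 1)) + Fhat f (u x)

def NonConstOn (R1 R2 : ℝ) (u : ℝ → ℝ) : Prop :=
  ∃ x ∈ Icc R1 R2, ∃ x' ∈ Icc R1 R2, u x ≠ u x'

def DistinctOn (R1 R2 : ℝ) (u v : ℝ → ℝ) : Prop :=
  ∃ x ∈ Icc R1 R2, u x ≠ v x

noncomputable def nOverPstar (p : ℝ) (N : ℕ) : ℝ :=
  if p < (N:ℝ) then ((N:ℝ) - p) / p else 0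

lemma fstar_bddAbove (f : ℝ → ℝ) (hf : ContinuousOn f (Ici 0)) {s : ℝ} (hs : 1 ≤ s) :
    BddAbove (f '' Icc 1 s) :=
  (isCompact_Icc.image_of_continuousOn
    (hf.mono (fun x hx => le_trans zero_le_one hx.1))).bddAbove

lemma le_fstar (f : ℝ → ℝ) (hf : ContinuousOn f (Ici 0)) {s x : ℝ} (hs : 1 ≤ s)
    (hx : x ∈ Icc 1 s) : f x ≤ fstar f s :=
  le_csSup (fstar_bddAbove f hf hs) (mem_image_of_mem f hx)

lemma fstar_pos (f : ℝ → ℝ) (hf : ContinuousOn f (Ici 0))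
    (heq : ∀ s : ℝ, 1 < s → 0 < f s) {s : ℝ} (hs : 1 < s) : 0 < fstar f s := by
  have hm : (1 + s) / 2 ∈ Icc 1 s := ⟨by linarith, by linarith⟩
  exact lt_of_lt_of_le (heq _ (by linarith)) (le_fstar f hf hs.le hm)

lemma Fint_integrable (f : ℝ → ℝ) (hf : ContinuousOn f (Ici 0)) {a t : ℝ}
    (ha : 0 ≤ a) (ht : 0 ≤ t) : IntervalIntegrable f MeasureTheory.volume a t :=
  (hf.mono (fun x hx => le_trans (le_min ha ht) hx.1)).intervalIntegrable

lemma Fint_pos (f : ℝ → ℝ) (hf : ContinuousOn f (Ici 0))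
    (heq : ∀ s : ℝ, 1 < s → 0 < f s) {t : ℝ} (ht : 1 < t) : 0 < Fint f t :=
  intervalIntegral.intervalIntegral_pos_of_pos_on
    (Fint_integrable f hf zero_le_one (by linarith))
    (fun x hx => heq x hx.1) ht

lemma hasDerivAt_Fint (f : ℝ → ℝ) (hf : ContinuousOn f (Ici 0)) {t : ℝ} (ht : 0 < t) :
    HasDerivAt (Fint f) (f t) t := by
  have hca : ContinuousAt f t := hf.continuousAt (Ici_mem_nhds ht)
  have hmeas : StronglyMeasurableAtFilter f (𝓝 t) :=
    ContinuousOn.stronglyMeasurableAtFilter isOpen_Ioi (hf.mono Ioi_subset_Ici_self) t ht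
  exact intervalIntegral.integral_hasDerivAt_right
    (Fint_integrable f hf zero_le_one ht.le) hmeas hca

theorem stmt6 (p : ℝ) (N : ℕ) (hp1 : 1 < p) (hpN : p < (N : ℝ))
    (f : ℝ → ℝ) (hreg : Freg f) (heq : Feq f) (hsubc : Fsubc p N f) :
    ∃ ε : ℝ, 0 < ε ∧ ∃ Cε : ℝ, 0 < Cε ∧ ∃ sε : ℝ, 1 < sε ∧
      ∀ s : ℝ, sε < s → f s ≤ Cε * s ^ ((N : ℝ) * p / ((N : ℝ) - p) - 1 - ε) := by
  obtain ⟨η, _hfreq, hη0, hη1, L, hLlt, hev⟩ := hsubc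
  have hfc : ContinuousOn f (Ici 0) := hreg.1
  have hfpos : ∀ s : ℝ, 1 < s → 0 < f s := heq.2.2.2
  set P : ℝ := (N : ℝ) * p / ((N : ℝ) - p) with hPdef
  have hLP : L < P := by
    rw [pstar, if_pos hpN] at hLlt
    exact_mod_cast hLlt
  obtain ⟨a, ha⟩ := eventually_atTop.mp hev
  have h2η : 0 < 2 / η := by positivity
  obtain ⟨s₀, hs₀a, hs₀2η, hs₀1⟩ : ∃ s₀ : ℝ, a ≤ s₀ ∧ 2 / η ≤ s₀ ∧ 1 < s₀ := by
    refine ⟨max a (2 / η) + 2, ?_, ?_, ?_⟩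
    · have := le_max_left a (2 / η); linarith
    · have := le_max_right a (2 / η); linarith
    · have := le_max_right a (2 / η); linarith
  -- basic facts for s ≥ s₀
  have hηs : ∀ s : ℝ, s₀ ≤ s → 1 < η * s := by
    intro s hs
    have h2 : 2 / η ≤ s := le_trans hs₀2η hs
    have : 2 ≤ η * s := by
      rw [div_le_iff₀ hη0] at h2
      linarith [h2]
    linarith
  have hspos : ∀ s : ℝ, s₀ ≤ s → 0 < s := fun s hs => by linarith
  set g : ℝ → ℝ := fun s => Fint f (η * s) with hgdef
  have hgpos : ∀ s : ℝ, s₀ ≤ s → 0 < g s := fun s hs =>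
    Fint_pos f hfc hfpos (hηs s hs)
  have hkey : ∀ s : ℝ, s₀ ≤ s → fstar f s * s ≤ L * g s := by
    intro s hs
    have := ha s (le_trans hs₀a hs)
    exact (div_le_iff₀ (hgpos s hs)).mp this
  have hL0 : 0 < L := by
    have h1 := hkey s₀ le_rfl
    have h2 := hgpos s₀ le_rfl
    have h3 : 0 < fstar f s₀ * s₀ :=
      mul_pos (fstar_pos f hfc hfpos hs₀1) (by linarith)
    nlinarith
  obtain ⟨q, hqdef⟩ : ∃ q : ℝ, q = η * L := ⟨_, rfl⟩
  have hq0 : 0 < q := hqdef ▸ mul_pos hη0 hL0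
  have hqP : q < P := by rw [hqdef]; nlinarith
  -- derivative of g
  have hgderiv : ∀ s : ℝ, s₀ ≤ s → HasDerivAt g (f (η * s) * η) s := by
    intro s hs
    have h1 : HasDerivAt (fun y : ℝ => η * y) η s := by
      simpa using (hasDerivAt_id s).const_mul η
    have h2 : HasDerivAt (Fint f) (f (η * s)) (η * s) :=
      hasDerivAt_Fint f hfc (by linarith [hηs s hs])
    exact h2.comp s h1
  -- the Gronwall quotient
  set h : ℝ → ℝ := fun s => g s * s ^ (-q) with hhdef
  have hhderiv : ∀ s : ℝ, s₀ ≤ s →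
      HasDerivAt h (f (η * s) * η * s ^ (-q) + g s * (-q * s ^ (-q - 1))) s := by
    intro s hs
    have hr : HasDerivAt (fun x : ℝ => x ^ (-q)) (-q * s ^ (-q - 1)) s :=
      Real.hasDerivAt_rpow_const (Or.inl (hspos s hs).ne')
    exact (hgderiv s hs).mul hr
  have hnonpos : ∀ s : ℝ, s₀ ≤ s →
      f (η * s) * η * s ^ (-q) + g s * (-q * s ^ (-q - 1)) ≤ 0 := by
    intro s hs
    have hs0 : 0 < s := hspos s hs
    have hηs1 : 1 < η * s := hηs s hs
    have hfle : f (η * s) ≤ fstar f s := by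
      apply le_fstar f hfc (by linarith)
      constructor
      · linarith
      · nlinarith
    have hkey' : f (η * s) * η * s ≤ q * g s := by
      have h1 : f (η * s) * s ≤ fstar f s * s :=
        mul_le_mul_of_nonneg_right hfle hs0.le
      have h2 := hkey s hs
      rw [hqdef]
      nlinarith [mul_le_mul_of_nonneg_left (h1.trans h2) hη0.le]
    have hu : (0 : ℝ) ≤ s ^ (-q - 1) := Real.rpow_nonneg hs0.le _
    have ht : s ^ (-q) = s ^ (-q - 1) * s := by
      rw [← Real.rpow_add_one hs0.ne']
      norm_num
    rw [ht]
    nlinarith [mul_le_mul_of_nonneg_right hkey' hu]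
  have hanti : AntitoneOn h (Ici s₀) := by
    apply antitoneOn_of_deriv_nonpos (convex_Ici s₀)
    · intro x hx
      exact (hhderiv x hx).continuousAt.continuousWithinAt
    · intro x hx
      rw [interior_Ici] at hx
      exact (hhderiv x (le_of_lt hx)).differentiableAt.differentiableWithinAt
    · intro x hx
      rw [interior_Ici] at hx
      rw [(hhderiv x (le_of_lt hx)).deriv]
      exact hnonpos x (le_of_lt hx)
  set C₀ : ℝ := g s₀ * s₀ ^ (-q) with hC₀def
  have hC₀pos : 0 < C₀ :=
    mul_pos (hgpos s₀ le_rfl) (Real.rpow_pos_of_pos (by linarith) _)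
  refine ⟨P - q, by linarith, L * C₀, mul_pos hL0 hC₀pos, s₀, hs₀1, ?_⟩
  intro s hs
  have hs' : s₀ ≤ s := hs.le
  have hs0 : 0 < s := hspos s hs'
  have hmem : h s ≤ h s₀ := hanti (mem_Ici.mpr le_rfl) hs' hs'
  have hgle : g s ≤ C₀ * s ^ q := by
    have h1 : h s * s ^ q ≤ C₀ * s ^ q :=
      mul_le_mul_of_nonneg_right hmem (Real.rpow_nonneg hs0.le _)
    have h2 : h s * s ^ q = g s := by
      rw [hhdef]
      simp only [mul_assoc, ← Real.rpow_add hs0]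
      norm_num
    linarith [h1, h2.symm.le, h2.ge]
  have hfstar : f s ≤ fstar f s :=
    le_fstar f hfc (by linarith) ⟨by linarith, le_rfl⟩
  have hfs : fstar f s * s ≤ L * g s := hkey s hs'
  have hexp : P - 1 - (P - q) = q - 1 := by ring
  rw [hexp]
  have hpow : s ^ (q - 1) = s ^ q / s := by
    rw [Real.rpow_sub hs0, Real.rpow_one]
  rw [hpow]
  have hrw : L * C₀ * (s ^ q / s) = L * C₀ * s ^ q / s := by ring
  rw [hrw, le_div_iff₀ hs0]
  calc f s * s ≤ fstar f s * s := mul_le_mul_of_nonneg_right hfstar hs0.le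
    _ ≤ L * g s := hfs
    _ ≤ L * (C₀ * s ^ q) := by nlinarith
    _ = L * C₀ * s ^ q := by ring
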